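/- (Orthoplex bound, real case) If φ_1,...,φ_n are unit vectors in ℝ^m with n > m(m+1)/2, then max_{j≠l} |⟨φ_j, φ_l⟩| ≥ 1/√m. -/

import Mathlib

open scoped InnerProductSpace

/-- The coherence of a family of vectors: the supremum of absolute pairwise inner products. -/
noncomputable def coherence (𝕜 : Type*) {E : Type*} [RCLike 𝕜] [NormedAddCommGroup E]
    [InnerProductSpace 𝕜 E] {n : ℕ} (φ : Fin n → E) : ℝ :=
  sSup {r : ℝ | ∃ j l : Fin n, j ≠ l ∧ r = ‖(⟪φ j, φ l⟫_𝕜 : 𝕜)‖}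

section OrthoplexAux

open Finset

/-- No family of pairwise-obtuse vectors inside a subspace `W` can have more than
`finrank W + 1` members. -/
lemma no_obtuse {F : Type*} [NormedAddCommGroup F] [InnerProductSpace ℝ F]
    [FiniteDimensional ℝ F] {n : ℕ} (W : Submodule ℝ F) (x : Fin n → F)
    (hx : ∀ j, x j ∈ W) (hneg : ∀ j l, j ≠ l → ⟪x j, x l⟫_ℝ < 0)
    (hn : Module.finrank ℝ W + 2 ≤ n) : False := by
  classical
  have hn2 : 2 ≤ n := le_trans (by omega) hn
  set last : Fin n := ⟨n-1, by omega⟩ with hlastdef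
  have hcard : Fintype.card {j : Fin n // j ≠ last} = n - 1 := by
    have := Fintype.card_subtype_compl (fun j : Fin n => j = last)
    simpa [Fintype.card_subtype_eq] using this
  let y : {j : Fin n // j ≠ last} → W := fun j => ⟨x j, hx j⟩
  have hdep : ¬ LinearIndependent ℝ y := by
    intro h
    have := h.fintype_card_le_finrank
    omega
  rw [Fintype.not_linearIndependent_iff] at hdep
  obtain ⟨c, hsum, i0, hi0⟩ := hdep
  set g : Fin n → ℝ := fun j => if h : j = last then 0 else c ⟨j, h⟩ with hg
  have hglast : g last = 0 := dif_pos rfl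
  have hgc : ∀ j : {j : Fin n // j ≠ last}, g j = c j := by
    intro j; simp only [hg, dif_neg j.2]
  have hgsum : ∑ j, g j • x j = 0 := by
    rw [show (Finset.univ : Finset (Fin n)) = insert last (Finset.univ.erase last) from
      (Finset.insert_erase (Finset.mem_univ _)).symm,
      Finset.sum_insert (Finset.notMem_erase _ _), hglast, zero_smul, zero_add]
    rw [Finset.sum_subtype (p := fun j => j ≠ last) _ (fun j => by simp [Finset.mem_erase])
      (fun j => g j • x j)]
    have : ∀ j : {j : Fin n // j ≠ last}, g j • x j = ((c j • y j : W) : F) := by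
      intro j; rw [hgc]; rfl
    rw [Finset.sum_congr rfl (fun j _ => this j)]
    rw [← Submodule.coe_sum, hsum, Submodule.coe_zero]
  set P := Finset.univ.filter (fun j => 0 < g j) with hP
  set N := Finset.univ.filter (fun j => g j < 0) with hN
  have hsplit : ∑ j ∈ P, g j • x j + ∑ j ∈ N, g j • x j = 0 := by
    rw [← hgsum]
    have h1 : ∑ j ∈ Finset.univ.filter (fun j => ¬ 0 < g j), g j • x j
        = ∑ j ∈ N, g j • x j := by
      symm
      apply Finset.sum_subset
      · intro j hj
        simp only [hN, Finset.mem_filter, Finset.mem_univ, true_and] at hj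
        simp only [Finset.mem_filter, Finset.mem_univ, true_and, not_lt]
        exact le_of_lt hj
      · intro j hj hjn
        simp only [Finset.mem_filter, Finset.mem_univ, true_and, not_lt] at hj
        simp only [hN, Finset.mem_filter, Finset.mem_univ, true_and, not_lt] at hjn
        have : g j = 0 := le_antisymm hj hjn
        simp [this]
    rw [← h1, Finset.sum_filter_add_sum_filter_not]
  have hyN : ∑ j ∈ P, g j • x j = ∑ j ∈ N, (-g j) • x j := by
    have h2 : ∑ j ∈ P, g j • x j = -∑ j ∈ N, g j • x j :=
      eq_neg_of_add_eq_zero_left hsplit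
    rw [h2, ← Finset.sum_neg_distrib]
    exact Finset.sum_congr rfl (fun j _ => (neg_smul _ _).symm)
  have hPN : ∀ j ∈ P, ∀ l ∈ N, ⟪x j, x l⟫_ℝ < 0 := by
    intro j hj l hl
    simp only [hP, Finset.mem_filter, Finset.mem_univ, true_and] at hj
    simp only [hN, Finset.mem_filter, Finset.mem_univ, true_and] at hl
    exact hneg j l (fun h => absurd (h ▸ hj) (not_lt.mpr (le_of_lt hl)))
  have hy0 : ∑ j ∈ P, g j • x j = 0 := by
    rw [← real_inner_self_nonpos]
    nth_rewrite 2 [hyN]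
    rw [inner_sum]
    apply Finset.sum_nonpos
    intro l hl
    rw [real_inner_smul_right, sum_inner]
    have hl' : g l < 0 := by
      simpa only [hN, Finset.mem_filter, Finset.mem_univ, true_and] using hl
    have hinner : ∑ j ∈ P, ⟪g j • x j, x l⟫_ℝ ≤ 0 := by
      apply Finset.sum_nonpos
      intro j hj
      rw [real_inner_smul_left]
      have hj' : 0 < g j := by
        simpa only [hP, Finset.mem_filter, Finset.mem_univ, true_and] using hj
      exact le_of_lt (mul_neg_of_pos_of_neg hj' (hPN j hj l hl))
    exact mul_nonpos_iff.mpr (Or.inl ⟨by linarith, hinner⟩)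
  have hlastg : ∀ j, g j ≠ 0 → j ≠ last := by
    intro j hj h; rw [h, hglast] at hj; exact hj rfl
  by_cases hPne : P.Nonempty
  · have h3 : ⟪x last, ∑ j ∈ P, g j • x j⟫_ℝ < 0 := by
      rw [inner_sum]
      have := Finset.sum_lt_sum_of_nonempty hPne
        (f := fun j => ⟪x last, g j • x j⟫_ℝ) (g := fun _ => (0:ℝ)) ?_
      · simpa using this
      · intro j hj
        have hj' : 0 < g j := by
          simpa only [hP, Finset.mem_filter, Finset.mem_univ, true_and] using hj
        show ⟪x last, g j • x j⟫_ℝ < 0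
        rw [real_inner_smul_right]
        exact mul_neg_of_pos_of_neg hj'
          (hneg last j (Ne.symm (hlastg j (ne_of_gt hj'))))
    rw [hy0, inner_zero_right] at h3; exact lt_irrefl _ h3
  · have hPe : P = ∅ := Finset.not_nonempty_iff_eq_empty.mp hPne
    have hNsum : ∑ j ∈ N, g j • x j = 0 := by
      rw [hPe, Finset.sum_empty] at hsplit; simpa using hsplit
    have hgi0 : g (i0 : Fin n) ≠ 0 := by rw [hgc]; exact hi0
    have hNne : N.Nonempty := by
      refine ⟨i0, ?_⟩
      have h4 : ¬ (0 < g (i0:Fin n)) := by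
        intro h
        exact (hPe ▸ Finset.notMem_empty (i0:Fin n))
          (Finset.mem_filter.mpr ⟨Finset.mem_univ _, h⟩)
      simp only [hN, Finset.mem_filter, Finset.mem_univ, true_and]
      exact lt_of_le_of_ne (not_lt.mp h4) hgi0
    have h3 : 0 < ⟪x last, ∑ j ∈ N, g j • x j⟫_ℝ := by
      rw [inner_sum]
      apply Finset.sum_pos ?_ hNne
      intro j hj
      have hj' : g j < 0 := by
        simpa only [hN, Finset.mem_filter, Finset.mem_univ, true_and] using hj
      rw [real_inner_smul_right]
      exact mul_pos_of_neg_of_neg hj'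
        (hneg last j (Ne.symm (hlastg j (ne_of_lt hj'))))
    rw [hNsum, inner_zero_right] at h3; exact lt_irrefl _ h3

/-- trace linear map on `EuclideanSpace ℝ (Fin m × Fin m)` -/
def traceMap (m : ℕ) : EuclideanSpace ℝ (Fin m × Fin m) →ₗ[ℝ] ℝ where
  toFun f := ∑ a : Fin m, f (a, a)
  map_add' f g := by simp [Finset.sum_add_distrib]
  map_smul' r f := by simp [Finset.mul_sum]

/-- subspace of symmetric "matrices" -/
def symSub (m : ℕ) : Submodule ℝ (EuclideanSpace ℝ (Fin m × Fin m)) where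
  carrier := {f | ∀ a b : Fin m, f (a, b) = f (b, a)}
  add_mem' := by intro f g hf hg a b; simp [PiLp.add_apply, hf a b, hg a b]
  zero_mem' := by intro a b; simp
  smul_mem' := by intro r f hf a b; simp [PiLp.smul_apply, hf a b]

/-- restriction to upper-triangular entries -/
def restrictMap (m : ℕ) :
    EuclideanSpace ℝ (Fin m × Fin m) →ₗ[ℝ] ({p : Fin m × Fin m // p.1 ≤ p.2} → ℝ) where
  toFun f q := f q.1
  map_add' _ _ := rfl
  map_smul' _ _ := rfl

noncomputable def idMat (m : ℕ) : EuclideanSpace ℝ (Fin m × Fin m) :=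
  (WithLp.equiv 2 _).symm (fun p : Fin m × Fin m => if p.1 = p.2 then (1:ℝ) else 0)

lemma idMat_apply (m : ℕ) (p : Fin m × Fin m) :
    idMat m p = if p.1 = p.2 then (1:ℝ) else 0 := rfl

lemma idMat_mem (m : ℕ) : idMat m ∈ symSub m := by
  intro a b
  simp only [idMat_apply]
  simp [eq_comm]

lemma trace_idMat (m : ℕ) : traceMap m (idMat m) = m := by
  simp [traceMap, idMat_apply]

lemma finrank_W_le (m : ℕ) (hm : 0 < m) :
    Module.finrank ℝ ↥(symSub m ⊓ LinearMap.ker (traceMap m)) + 1 ≤ m * (m + 1) / 2 := by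
  classical
  have hcard : Fintype.card {p : Fin m × Fin m // p.1 ≤ p.2} = m * (m + 1) / 2 := by
    rw [← Fintype.card_congr (Sym2.sortEquiv (α := Fin m)), Sym2.card]
    simp only [Fintype.card_fin, Nat.choose_two_right, Nat.add_sub_cancel]
    rw [Nat.mul_comm]
  have hinj : Function.Injective ((restrictMap m).domRestrict (symSub m)) := by
    rw [← LinearMap.ker_eq_bot, LinearMap.ker_eq_bot']
    rintro ⟨f, hf⟩ hf0
    have h0 : ∀ q : {p : Fin m × Fin m // p.1 ≤ p.2}, f q.1 = 0 := by
      intro q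
      exact congrFun hf0 q
    apply Subtype.ext
    apply PiLp.ext; intro p
    obtain ⟨a, b⟩ := p
    show f (a, b) = 0
    rcases le_total a b with h | h
    · exact h0 ⟨(a, b), h⟩
    · rw [hf a b]; exact h0 ⟨(b, a), h⟩
  have hsym_le : Module.finrank ℝ (symSub m) ≤ m * (m + 1) / 2 := by
    have := LinearMap.finrank_le_finrank_of_injective hinj
    rwa [Module.finrank_fintype_fun_eq_card, hcard] at this
  set L := (traceMap m).domRestrict (symSub m) with hL
  have hrn := LinearMap.finrank_range_add_finrank_ker L
  have hrange : 0 < Module.finrank ℝ (LinearMap.range L) := by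
    rw [Module.finrank_pos_iff]
    have hmem : ((m : ℝ)) ∈ LinearMap.range L :=
      ⟨⟨idMat m, idMat_mem m⟩, trace_idMat m⟩
    refine ⟨⟨(m : ℝ), hmem⟩, 0, ?_⟩
    intro h
    have := congrArg Subtype.val h
    simp only [Submodule.coe_zero] at this
    exact (Nat.cast_ne_zero (R := ℝ)).mpr hm.ne' this
  have hker : Module.finrank ℝ (LinearMap.ker L)
      = Module.finrank ℝ ↥(symSub m ⊓ LinearMap.ker (traceMap m)) := by
    have e1 : LinearMap.ker L
        = Submodule.comap (symSub m).subtype (symSub m ⊓ LinearMap.ker (traceMap m)) := by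
      rw [hL, LinearMap.ker_domRestrict, Submodule.comap_inf, Submodule.comap_subtype_self,
        top_inf_eq]
    rw [e1]
    exact (Submodule.comapSubtypeEquivOfLe inf_le_left).finrank_eq
  omega

variable {m n : ℕ}

noncomputable def outerVec (φ : EuclideanSpace ℝ (Fin m)) :
    EuclideanSpace ℝ (Fin m × Fin m) :=
  (WithLp.equiv 2 _).symm (fun p : Fin m × Fin m => φ p.1 * φ p.2)

lemma outerVec_apply (φ : EuclideanSpace ℝ (Fin m)) (p : Fin m × Fin m) :
    outerVec φ p = φ p.1 * φ p.2 := rfl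

lemma inner_outer (φ ψ : EuclideanSpace ℝ (Fin m)) :
    ⟪outerVec φ, outerVec ψ⟫_ℝ = (⟪φ, ψ⟫_ℝ) ^ 2 := by
  simp only [PiLp.inner_apply, RCLike.inner_apply, conj_trivial, outerVec_apply]
  rw [Fintype.sum_prod_type, sq, Finset.sum_mul_sum]
  exact Finset.sum_congr rfl fun a _ => Finset.sum_congr rfl fun b _ => by ring

lemma inner_outer_id (φ : EuclideanSpace ℝ (Fin m)) (hφ : ‖φ‖ = 1) :
    ⟪outerVec φ, idMat m⟫_ℝ = 1 := by
  have h1 : ⟪φ, φ⟫_ℝ = 1 := by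
    rw [real_inner_self_eq_norm_mul_norm, hφ, mul_one]
  simp only [PiLp.inner_apply, RCLike.inner_apply, conj_trivial, outerVec_apply] at h1 ⊢
  rw [Fintype.sum_prod_type]
  simp only [idMat_apply]
  simpa [mul_ite, mul_one, mul_zero] using h1

lemma inner_id_id : ⟪idMat m, idMat m⟫_ℝ = m := by
  simp only [PiLp.inner_apply, RCLike.inner_apply, conj_trivial]
  rw [Fintype.sum_prod_type]
  simp [idMat_apply]

end OrthoplexAux

/-- Orthoplex bound (real case): more than `m(m+1)/2` unit vectors in `ℝ^m` have coherence at
least `1/√m`. -/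
theorem orthoplex_bound_real (m n : ℕ) (hm : 0 < m) (hn : m * (m + 1) / 2 < n)
    (φ : Fin n → EuclideanSpace ℝ (Fin m)) (hunit : ∀ j, ‖φ j‖ = 1) :
    coherence ℝ φ ≥ 1 / Real.sqrt m := by
  classical
  have hm0 : ((m:ℝ)) ≠ 0 := Nat.cast_ne_zero.mpr hm.ne'
  have key : ∃ j l : Fin n, j ≠ l ∧ ((m:ℝ))⁻¹ ≤ (⟪φ j, φ l⟫_ℝ) ^ 2 := by
    by_contra hcon
    push_neg at hcon
    set x : Fin n → EuclideanSpace ℝ (Fin m × Fin m) :=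
      fun j => outerVec (φ j) - (m:ℝ)⁻¹ • idMat m with hx
    have hxin : ∀ j l, ⟪x j, x l⟫_ℝ = (⟪φ j, φ l⟫_ℝ) ^ 2 - (m:ℝ)⁻¹ := by
      intro j l
      have h3 : ⟪idMat m, outerVec (φ l)⟫_ℝ = 1 := by
        rw [real_inner_comm]; exact inner_outer_id _ (hunit l)
      simp only [hx, inner_sub_left, inner_sub_right, real_inner_smul_left,
        real_inner_smul_right, inner_outer, inner_id_id, h3,
        inner_outer_id _ (hunit j)]
      field_simp
      ring
    have hmem : ∀ j, x j ∈ symSub m ⊓ LinearMap.ker (traceMap m) := by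
      intro j
      constructor
      · intro a b
        show outerVec (φ j) (a,b) - ((m:ℝ)⁻¹ • idMat m) (a,b)
          = outerVec (φ j) (b,a) - ((m:ℝ)⁻¹ • idMat m) (b,a)
        simp only [PiLp.smul_apply, outerVec_apply, idMat_apply, smul_eq_mul]
        by_cases hab : a = b
        · subst hab; rfl
        · simp [hab, Ne.symm hab, mul_comm]
      · have hsq : ∑ a : Fin m, φ j a * φ j a = 1 := by
          have h1 : ⟪φ j, φ j⟫_ℝ = 1 := by
            rw [real_inner_self_eq_norm_mul_norm, hunit, mul_one]
          rw [PiLp.inner_apply] at h1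
          simpa only [RCLike.inner_apply, conj_trivial] using h1
        simp only [LinearMap.mem_ker, traceMap, LinearMap.coe_mk, AddHom.coe_mk]
        show ∑ a : Fin m, (outerVec (φ j) (a,a) - ((m:ℝ)⁻¹ • idMat m) (a,a)) = 0
        simp only [PiLp.smul_apply, outerVec_apply, idMat_apply, smul_eq_mul, if_pos rfl, if_true,
          mul_one, Finset.sum_sub_distrib, hsq, Finset.sum_const, Finset.card_univ,
          Fintype.card_fin, nsmul_eq_mul]
        field_simp
        ring
    have hneg : ∀ j l, j ≠ l → ⟪x j, x l⟫_ℝ < 0 := by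
      intro j l hjl
      rw [hxin]
      have := hcon j l hjl
      linarith
    have hcount : Module.finrank ℝ ↥(symSub m ⊓ LinearMap.ker (traceMap m)) + 2 ≤ n := by
      have := finrank_W_le m hm
      omega
    exact no_obtuse _ x hmem hneg hcount
  obtain ⟨j, l, hjl, hge⟩ := key
  have habs : 1 / Real.sqrt m ≤ ‖(⟪φ j, φ l⟫_ℝ : ℝ)‖ := by
    rw [Real.norm_eq_abs, ← Real.sqrt_sq_eq_abs, one_div, ← Real.sqrt_inv]
    exact Real.sqrt_le_sqrt hge
  have hbdd : BddAbove {r : ℝ | ∃ j l : Fin n, j ≠ l ∧ r = ‖(⟪φ j, φ l⟫_ℝ : ℝ)‖} := by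
    apply Set.Finite.bddAbove
    apply Set.Finite.subset (Set.finite_range
      (fun p : Fin n × Fin n => ‖(⟪φ p.1, φ p.2⟫_ℝ : ℝ)‖))
    rintro r ⟨j', l', _, rfl⟩
    exact ⟨(j', l'), rfl⟩
  exact le_trans habs (le_csSup hbdd ⟨j, l, hjl, rfl⟩)
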